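/- Let m₁ > 0 be the unique positive real solution of e^{m₁} = 1 + 2 m₁ and set R' = 1 − e^{−m₁}. Fix a real R with R' < R < 1, and for each integer b ≥ 1 let m(b) be the unique positive real with P(b, m(b)) = R, where P(b, m) = (1/(b−1)!) ∫₀^m t^{b−1} e^{−t} dt. Then the sequence b ↦ m(b)/b is nonincreasing: for all integers 1 ≤ b ≤ b', m(b)/b ≥ m(b')/b'. In particular, for every task size s the minimum of m(b)/b over 1 ≤ b ≤ s is attained at b = s, i.e., the maximum batch size is optimal whenever R > R'. -/

import Mathlib

/-- The regularized lower incomplete gamma function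
`P (b, m) = (1/(b-1)!) ∫₀^m t^(b-1) e^(-t) dt` for integer shape `b ≥ 1`. -/
noncomputable def regIncGamma (b : ℕ) (m : ℝ) : ℝ :=
  (1 / (Nat.factorial (b - 1) : ℝ)) * ∫ t in (0:ℝ)..m, t ^ (b - 1) * Real.exp (-t)


open Real intervalIntegral Finset



noncomputable def Esum (n : ℕ) (x : ℝ) : ℝ := ∑ k ∈ Finset.range (n+1), x^k / k.factorial

lemma Esum_hasDeriv (n : ℕ) (x : ℝ) :
    HasDerivAt (fun y => Esum n y) (Esum n x - x^n / n.factorial) x := by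
  induction n with
  | zero =>
      have : (fun y : ℝ => Esum 0 y) = fun _ => (1:ℝ) := by
        funext y; simp [Esum]
      rw [this]
      simpa [Esum] using hasDerivAt_const x (1:ℝ)
  | succ n ih =>
      have h2 : HasDerivAt (fun y : ℝ => y^(n+1) / (n+1).factorial)
          ((n+1) * x^n / (n+1).factorial) x := by
        simpa [mul_div_assoc] using (hasDerivAt_pow (n+1) x).div_const ((n+1).factorial : ℝ)
      have heq : (fun y => Esum (n+1) y) = fun y => Esum n y + y^(n+1) / (n+1).factorial := by
        funext y; simp [Esum, Finset.sum_range_succ]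
      rw [heq]
      have := ih.add h2
      refine this.congr_deriv (Eq.symm ?_)
      have hfac : ((n+1).factorial : ℝ) = (n+1) * n.factorial := by
        push_cast [Nat.factorial_succ]; ring
      have hn1 : ((n:ℝ)+1) ≠ 0 := by positivity
      have hnf : (n.factorial : ℝ) ≠ 0 := by positivity
      simp only [Esum, Finset.sum_range_succ]
      push_cast [hfac]
      field_simp
      ring

lemma cont_pow_exp (n : ℕ) : Continuous fun t : ℝ => t^n * Real.exp (-t) := by
  continuity

lemma integral_pow_exp_neg (n : ℕ) (a c : ℝ) :
    ∫ t in a..c, t^n * Real.exp (-t)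
      = (n.factorial : ℝ) * (Real.exp (-a) * Esum n a - Real.exp (-c) * Esum n c) := by
  have hderiv : ∀ x ∈ Set.uIcc a c,
      HasDerivAt (fun t => -((n.factorial : ℝ) * (Real.exp (-t) * Esum n t)))
        (x^n * Real.exp (-x)) x := by
    intro x _
    have hexp : HasDerivAt (fun t : ℝ => Real.exp (-t)) (-Real.exp (-x)) x := by
      simpa using ((hasDerivAt_neg x).exp)
    have hmul := hexp.mul (Esum_hasDeriv n x)
    have := (hmul.const_mul ((n.factorial : ℝ))).neg
    refine this.congr_deriv (Eq.symm ?_)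
    have hnf : (n.factorial : ℝ) ≠ 0 := by positivity
    field_simp
    ring
  have hint : IntervalIntegrable (fun t : ℝ => t^n * Real.exp (-t)) MeasureTheory.volume a c :=
    (cont_pow_exp n).intervalIntegrable a c
  rw [intervalIntegral.integral_eq_sub_of_hasDerivAt hderiv hint]
  ring

lemma Esum_zero_eval (n : ℕ) : Esum n 0 = 1 := by
  simp [Esum, Finset.sum_range_succ']




lemma regIncGamma_eq (b : ℕ) (x : ℝ) :
    regIncGamma b x = 1 - Real.exp (-x) * Esum (b-1) x := by
  rw [regIncGamma, integral_pow_exp_neg, Esum_zero_eval]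
  have : ((b-1).factorial : ℝ) ≠ 0 := by positivity
  field_simp
  simp

lemma regIncGamma_strictMono (b : ℕ) {y z : ℝ} (hy : 0 ≤ y) (hyz : y < z) :
    regIncGamma b y < regIncGamma b z := by
  have key : regIncGamma b z - regIncGamma b y
      = (1 / ((b-1).factorial : ℝ)) * ∫ t in y..z, t^(b-1) * Real.exp (-t) := by
    rw [regIncGamma_eq, regIncGamma_eq, integral_pow_exp_neg]
    have : ((b-1).factorial : ℝ) ≠ 0 := by positivity
    field_simp <;> ring
  have hpos : 0 < ∫ t in y..z, t^(b-1) * Real.exp (-t) := by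
    apply intervalIntegral.intervalIntegral_pos_of_pos_on
      ((cont_pow_exp (b-1)).intervalIntegrable y z)
    · intro x hx
      have hx0 : 0 < x := lt_of_le_of_lt hy hx.1
      positivity
    · exact hyz
  have : 0 < regIncGamma b z - regIncGamma b y := by
    rw [key]; positivity
  linarith

lemma regIncGamma_mono (b : ℕ) {y z : ℝ} (hy : 0 ≤ y) (hyz : y ≤ z) :
    regIncGamma b y ≤ regIncGamma b z := by
  rcases eq_or_lt_of_le hyz with h | h
  · rw [h]
  · exact (regIncGamma_strictMono b hy h).le

lemma step_identity (b : ℕ) (hb : 1 ≤ b) (x M : ℝ) :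
    regIncGamma (b+1) M - regIncGamma b x
      = (1 / (b.factorial : ℝ)) * ((∫ t in x..M, t^b * Real.exp (-t)) - x^b * Real.exp (-x)) := by
  obtain ⟨c, rfl⟩ : ∃ c, b = c + 1 := ⟨b - 1, (Nat.succ_pred_eq_of_pos hb).symm⟩
  rw [regIncGamma_eq, regIncGamma_eq, integral_pow_exp_neg]
  have h1 : (c+1+1) - 1 = c+1 := rfl
  have h2 : (c+1) - 1 = c := rfl
  rw [h1, h2]
  have hE : Esum (c+1) x = Esum c x + x^(c+1) / (c+1).factorial := by
    simp [Esum, Finset.sum_range_succ]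
  rw [hE]
  have : ((c+1).factorial : ℝ) ≠ 0 := by positivity
  field_simp
  ring




lemma Esum_one (x : ℝ) : Esum 1 x = 1 + x := by
  simp [Esum, Finset.sum_range_succ]

lemma Esum_zero' (x : ℝ) : Esum 0 x = 1 := by simp [Esum]

lemma pointwise_lin (c : ℕ) {m t : ℝ} (hm : 0 < m) (ht : m ≤ t) :
    m^(c+1) + ((c:ℝ)+1) * m^c * (t - m) ≤ t^(c+1) := by
  have ha : (-2:ℝ) ≤ (t - m)/m := by
    have h0 : (0:ℝ) ≤ (t-m)/m := div_nonneg (by linarith) hm.le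
    linarith
  have key := one_add_mul_le_pow ha (c+1)
  have h1 : (1:ℝ) + (t-m)/m = t/m := by field_simp; ring
  rw [h1] at key
  have key2 := mul_le_mul_of_nonneg_right key (le_of_lt (pow_pos hm (c+1)))
  have h2 : (t/m)^(c+1) * m^(c+1) = t^(c+1) := by
    rw [div_pow]; field_simp
  rw [h2] at key2
  have h3 : m^(c+1) + ((c:ℝ)+1) * m^c * (t - m)
      = (1 + (((c+1:ℕ)):ℝ) * ((t-m)/m)) * m^(c+1) := by
    push_cast
    have hm0 : m ≠ 0 := ne_of_gt hm
    field_simp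
    ring
  rw [h3]
  exact key2

lemma B_simple (c : ℕ) {m x : ℝ} (hx : 0 < x) (hm : m = ((c:ℝ)+1)*x)
    (h2x : 1 + 2*x ≤ Real.exp x) :
    m^(c+1) * Real.exp (-m) ≤ ∫ t in m..(m+x), t^(c+1) * Real.exp (-t) := by
  have hmpos : 0 < m := by rw [hm]; positivity
  have hmono : (∫ t in m..(m+x), ((m^(c+1) - ((c:ℝ)+1)*m^c*m) * (t^0 * Real.exp (-t))
        + ((c:ℝ)+1)*m^c * (t^1 * Real.exp (-t))))
      ≤ ∫ t in m..(m+x), t^(c+1) * Real.exp (-t) := by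
    apply intervalIntegral.integral_mono_on (by linarith)
    · exact (Continuous.intervalIntegrable (by continuity) _ _)
    · exact (cont_pow_exp (c+1)).intervalIntegrable _ _
    · intro t ht
      have h1 := pointwise_lin c hmpos ht.1
      have h2 : (m^(c+1) - ((c:ℝ)+1)*m^c*m) * (t^0 * Real.exp (-t))
            + ((c:ℝ)+1)*m^c * (t^1 * Real.exp (-t))
          = (m^(c+1) + ((c:ℝ)+1)*m^c*(t-m)) * Real.exp (-t) := by ring
      rw [h2]
      exact mul_le_mul_of_nonneg_right h1 (Real.exp_pos _).le
  refine le_trans ?_ hmono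
  rw [intervalIntegral.integral_add
        ((Continuous.intervalIntegrable (by continuity) _ _))
        ((Continuous.intervalIntegrable (by continuity) _ _)),
      intervalIntegral.integral_const_mul, intervalIntegral.integral_const_mul,
      integral_pow_exp_neg, integral_pow_exp_neg]
  simp only [Esum_zero', Esum_one, Nat.factorial_zero, Nat.factorial_one, Nat.cast_one]
  have hexp : Real.exp (-(m+x)) = Real.exp (-m) * Real.exp (-x) := by
    rw [show -(m+x) = -m + -x by ring, Real.exp_add]
  rw [hexp]
  have hq : Real.exp (-x) * (1 + 2*x) ≤ 1 := by
    have h0 : Real.exp (-x) * Real.exp x = 1 := by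
      rw [← Real.exp_add]; simp
    calc Real.exp (-x) * (1+2*x) ≤ Real.exp (-x) * Real.exp x :=
          mul_le_mul_of_nonneg_left h2x (Real.exp_pos _).le
      _ = 1 := h0
  have fact0 : 0 ≤ Real.exp (-m) * m^c * (((c:ℝ)+1)) * (1 - Real.exp (-x)*(1+2*x)) := by
    have h2 : 0 ≤ 1 - Real.exp (-x)*(1+2*x) := by linarith
    have h1 : (0:ℝ) ≤ Real.exp (-m) * m^c * (((c:ℝ)+1)) := by positivity
    exact mul_nonneg h1 h2
  have expand : ((m ^ (c + 1) - ((c:ℝ) + 1) * m ^ c * m) * (1 * (Real.exp (-m) * 1 - Real.exp (-m) * Real.exp (-x) * 1)) +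
      ((c:ℝ) + 1) * m ^ c * (1 * (Real.exp (-m) * (1 + m) - Real.exp (-m) * Real.exp (-x) * (1 + (m + x)))))
      - m^(c+1) * Real.exp (-m)
      = Real.exp (-m) * m^c * (((c:ℝ)+1)) * (1 - Real.exp (-x)*(1+2*x)) := by
    rw [pow_succ]
    rw [hm]
    ring
  linarith [expand, fact0]



lemma exp_neg_bound4 {v : ℝ} (h0 : 0 ≤ v) (h1 : v ≤ 1) :
    |Real.exp (-v) - (1 - v + v^2/2 - v^3/6)| ≤ 5*v^4/96 := by
  have h := Real.exp_bound (x := -v) (by rwa [abs_neg, abs_of_nonneg h0]) (n := 4) (by norm_num)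
  have hs : ∑ m ∈ Finset.range 4, (-v)^m / m.factorial = 1 - v + v^2/2 - v^3/6 := by
    norm_num [Finset.sum_range_succ, Nat.factorial]
    ring
  rw [hs] at h
  have habs : |(-v)| = v := by rw [abs_neg, abs_of_nonneg h0]
  rw [habs] at h
  norm_num [Nat.factorial] at h
  linarith

lemma exp_neg_upper4 {v : ℝ} (h0 : 0 ≤ v) (h1 : v ≤ 1) :
    Real.exp (-v) ≤ 1 - v + v^2/2 - v^3/6 + 5*v^4/96 := by
  have := (abs_le.1 (exp_neg_bound4 h0 h1)).2
  linarith

lemma exp_neg_lower4 {v : ℝ} (h0 : 0 ≤ v) (h1 : v ≤ 1) :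
    1 - v + v^2/2 - v^3/6 - 5*v^4/96 ≤ Real.exp (-v) := by
  have := (abs_le.1 (exp_neg_bound4 h0 h1)).1
  linarith

lemma r_bound {v : ℝ} (h0 : 0 ≤ v) (h1 : v ≤ 1) :
    1 - v^2/2 ≤ (1+v) * Real.exp (-v) := by
  have h := exp_neg_lower4 h0 h1
  nlinarith [pow_nonneg h0 3, pow_nonneg h0 4, pow_nonneg h0 5]

lemma scalar_quad {b ε : ℝ} (hε0 : 0 < ε) (hε26 : ε ≤ 0.26) (hbe : 0.52 ≤ b*ε) (hb : 1 ≤ b) :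
    1 ≤ (1+ε)*((1 - Real.exp (-ε))/ε) - (1+ε)/(6*b) := by
  have hq := exp_neg_upper4 hε0.le (by linarith)
  have h1 : (1 - Real.exp (-ε))/ε ≥ 1 - ε/2 + ε^2/6 - 5*ε^3/96 := by
    rw [ge_iff_le, le_div_iff₀ hε0]
    nlinarith
  have h2 : (1+ε)/(6*b) ≤ (1+ε)*ε/(6*0.52) := by
    rw [div_le_div_iff₀ (by linarith) (by norm_num)]
    nlinarith
  have h3 : (1+ε)*((1 - Real.exp (-ε))/ε) ≥ (1+ε)*(1 - ε/2 + ε^2/6 - 5*ε^3/96) :=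
    mul_le_mul_of_nonneg_left h1 (by linarith)
  have h4 : 0 ≤ ε*(0.26 - ε) := mul_nonneg hε0.le (by linarith)
  have h5 : 0 ≤ ε^3*(11 - 5*ε) := mul_nonneg (pow_nonneg hε0.le 3) (by linarith)
  have he : (1+ε)*ε/(6*0.52) = (1+ε)*ε*(25/78) := by ring
  have key : 1 + (1+ε)*ε/(6*0.52) ≤ (1+ε)*(1 - ε/2 + ε^2/6 - 5*ε^3/96) := by
    rw [he]
    nlinarith [h4, h5, hε0.le]
  linarith



set_option maxHeartbeats 1000000 in
lemma B_quad (c : ℕ) {m x ε : ℝ} (hx : x = 1 + ε) (hm : m = ((c:ℝ)+1)*x)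
    (hε0 : 0 < ε) (hε26 : ε ≤ 0.26) (hbe : 0.52 ≤ ((c:ℝ)+1)*ε) :
    m^(c+1) * Real.exp (-m) ≤ ∫ t in m..(m+x), t^(c+1) * Real.exp (-t) := by
  set B : ℝ := (c:ℝ)+1 with hB
  have hBpos : 0 < B := by rw [hB]; positivity
  have hB1 : 1 ≤ B := by rw [hB]; simp
  have hxpos : 0 < x := by rw [hx]; linarith
  have hmpos : 0 < m := by rw [hm]; positivity
  -- pointwise bound
  have key_pt : ∀ t ∈ Set.Icc m (m+x),
      m^(c+1) * Real.exp (-m) * (Real.exp (-(ε/x)*(t-m)) - (B/(2*m^2))*(t-m)^2)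
        ≤ t^(c+1) * Real.exp (-t) := by
    intro t ht
    obtain ⟨ht1, ht2⟩ := ht
    set s : ℝ := t - m with hs
    have hs0 : 0 ≤ s := by simp [hs]; linarith
    have hsx : s ≤ x := by simp [hs]; linarith
    set v : ℝ := s/m with hv
    have h0v : 0 ≤ v := div_nonneg hs0 hmpos.le
    have h1v : v ≤ 1 := by
      rw [hv, div_le_one hmpos]
      have : x ≤ m := by
        rw [hm]; nlinarith
      linarith
    have hr := r_bound h0v h1v
    have hvsq : 0 ≤ 1 - v^2/2 := by nlinarith
    have hpow1 : (1 - v^2/2)^(c+1) ≤ ((1+v)*Real.exp (-v))^(c+1) :=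
      pow_le_pow_left₀ hvsq hr (c+1)
    have hbern : 1 + (((c+1:ℕ)):ℝ)*(-(v^2/2)) ≤ (1 - v^2/2)^(c+1) := by
      have := one_add_mul_le_pow (a := -(v^2/2)) (by nlinarith) (c+1)
      refine le_trans (le_of_eq ?_) (this.trans (le_of_eq ?_)) <;> push_cast <;> ring
    have hexpand : ((1+v)*Real.exp (-v))^(c+1) = (1+v)^(c+1) * Real.exp (-(B*v)) := by
      have hee : Real.exp (-v)^(c+1) = Real.exp (-(B*v)) := by
        rw [← Real.exp_nat_mul]
        congr 1
        push_cast [hB]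
        ring
      rw [mul_pow, hee]
    have hmain : (1 - B*v^2/2) * Real.exp (B*v) ≤ (1+v)^(c+1) := by
      have h1 : 1 - B*v^2/2 ≤ (1+v)^(c+1) * Real.exp (-(B*v)) := by
        rw [← hexpand]
        calc 1 - B*v^2/2 = 1 + (((c+1:ℕ)):ℝ)*(-(v^2/2)) := by push_cast [hB]; ring
          _ ≤ (1 - v^2/2)^(c+1) := hbern
          _ ≤ ((1+v)*Real.exp (-v))^(c+1) := hpow1
      have h2 := mul_le_mul_of_nonneg_right h1 (Real.exp_pos (B*v)).le
      have h3 : Real.exp (-(B*v)) * Real.exp (B*v) = 1 := by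
        rw [← Real.exp_add]; simp
      calc (1 - B*v^2/2) * Real.exp (B*v) ≤ (1+v)^(c+1) * Real.exp (-(B*v)) * Real.exp (B*v) := h2
        _ = (1+v)^(c+1) := by rw [mul_assoc, h3, mul_one]
    have htv : t = m*(1+v) := by
      rw [hv, hs]
      field_simp
      ring
    have hts : t^(c+1) * Real.exp (-t) = m^(c+1) * Real.exp (-m) * ((1+v)^(c+1) * Real.exp (-s)) := by
      rw [htv, mul_pow]
      have : -(m*(1+v)) = -m + -(m*v) := by ring
      rw [this, Real.exp_add]
      have hmv : m*v = s := by rw [hv]; field_simp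
      rw [hmv]
      ring
    have hbvs : B*v - s = -(ε/x)*s := by
      have hBv : B*v = s/x := by
        rw [hv, hm]
        field_simp
      rw [hBv, hx]
      field_simp
      ring
    have hexps : Real.exp (B*v) * Real.exp (-s) = Real.exp (-(ε/x)*s) := by
      rw [← Real.exp_add, ← hbvs]
      ring_nf
    have hlast : (1 - B*v^2/2) * Real.exp (-(ε/x)*s) ≥ Real.exp (-(ε/x)*s) - B*s^2/(2*m^2) := by
      have hexp1 : Real.exp (-(ε/x)*s) ≤ 1 := by
        apply Real.exp_le_one_iff.2
        have : 0 ≤ (ε/x)*s := mul_nonneg (div_nonneg hε0.le hxpos.le) hs0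
        linarith
      have hc0 : 0 ≤ B*v^2/2 := by positivity
      have hveq : B*v^2/2 = B*s^2/(2*m^2) := by
        rw [hv, div_pow]
        ring
      have h5 : 0 ≤ (B*v^2/2) * (1 - Real.exp (-(ε/x)*s)) :=
        mul_nonneg hc0 (by linarith)
      rw [← hveq]
      nlinarith [h5]
    calc m^(c+1) * Real.exp (-m) * (Real.exp (-(ε/x)*(t-m)) - (B/(2*m^2))*(t-m)^2)
        = m^(c+1) * Real.exp (-m) * (Real.exp (-(ε/x)*s) - B*s^2/(2*m^2)) := by
          rw [← hs]; ring
      _ ≤ m^(c+1) * Real.exp (-m) * ((1 - B*v^2/2) * Real.exp (-(ε/x)*s)) := by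
          apply mul_le_mul_of_nonneg_left _ (by positivity)
          linarith [hlast]
      _ = m^(c+1) * Real.exp (-m) * ((1 - B*v^2/2) * (Real.exp (B*v) * Real.exp (-s))) := by
          rw [hexps]
      _ ≤ m^(c+1) * Real.exp (-m) * ((1+v)^(c+1) * Real.exp (-s)) := by
          apply mul_le_mul_of_nonneg_left _ (by positivity)
          have := mul_le_mul_of_nonneg_right hmain (Real.exp_pos (-s)).le
          calc (1 - B*v^2/2) * (Real.exp (B*v) * Real.exp (-s))
              = (1 - B*v^2/2) * Real.exp (B*v) * Real.exp (-s) := by ring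
            _ ≤ (1+v)^(c+1) * Real.exp (-s) := this
      _ = t^(c+1) * Real.exp (-t) := hts.symm
  have hInt1 : ∫ t in m..(m+x), Real.exp (-(ε/x)*(t-m)) = (x/ε) * (1 - Real.exp (-ε)) := by
    have hd : ∀ u ∈ Set.uIcc m (m+x),
        HasDerivAt (fun t => -(x/ε) * Real.exp (-(ε/x)*(t-m))) (Real.exp (-(ε/x)*(u-m))) u := by
      intro u _
      have h1 : HasDerivAt (fun t : ℝ => -(ε/x)*(t-m)) (-(ε/x)) u := by
        simpa using ((hasDerivAt_id u).sub_const m).const_mul (-(ε/x))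
      have h2 := (h1.exp).const_mul (-(x/ε))
      refine h2.congr_deriv (Eq.symm ?_)
      field_simp
    rw [intervalIntegral.integral_eq_sub_of_hasDerivAt hd
        (Continuous.intervalIntegrable (by continuity) _ _)]
    have e1 : -(ε/x)*((m+x)-m) = -ε := by field_simp; ring
    have e2 : -(ε/x)*(m-m) = 0 := by ring
    rw [e1, e2, Real.exp_zero]
    ring
  have hInt2 : ∫ t in m..(m+x), (t-m)^2 = x^3/3 := by
    have hd : ∀ u ∈ Set.uIcc m (m+x),
        HasDerivAt (fun t => (t-m)^3/3) ((u-m)^2) u := by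
      intro u _
      have h1 := (((hasDerivAt_id u).sub_const m).pow 3).div_const 3
      refine h1.congr_deriv (Eq.symm ?_)
      simp
    rw [intervalIntegral.integral_eq_sub_of_hasDerivAt hd
        (Continuous.intervalIntegrable (by continuity) _ _)]
    ring
  have int1 : IntervalIntegrable (fun t => Real.exp (-(ε/x)*(t-m))) MeasureTheory.volume m (m+x) :=
    Continuous.intervalIntegrable (by continuity) _ _
  have int2 : IntervalIntegrable (fun t => (B/(2*m^2))*(t-m)^2) MeasureTheory.volume m (m+x) :=
    Continuous.intervalIntegrable (by continuity) _ _
  have hIcomp : (∫ t in m..(m+x), m^(c+1)*Real.exp (-m) * (Real.exp (-(ε/x)*(t-m)) - (B/(2*m^2))*(t-m)^2))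
      = m^(c+1)*Real.exp (-m) * ((x/ε)*(1-Real.exp (-ε)) - (B/(2*m^2))*(x^3/3)) := by
    rw [intervalIntegral.integral_const_mul, intervalIntegral.integral_sub int1 int2,
        intervalIntegral.integral_const_mul, hInt1, hInt2]
  have hmono : (∫ t in m..(m+x), m^(c+1)*Real.exp (-m) * (Real.exp (-(ε/x)*(t-m)) - (B/(2*m^2))*(t-m)^2))
      ≤ ∫ t in m..(m+x), t^(c+1) * Real.exp (-t) := by
    apply intervalIntegral.integral_mono_on (by linarith)
    · exact Continuous.intervalIntegrable (by continuity) _ _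
    · exact (cont_pow_exp (c+1)).intervalIntegrable _ _
    · exact key_pt
  have hscalar := scalar_quad hε0 hε26 hbe hB1
  have heq2 : (x/ε)*(1-Real.exp (-ε)) - (B/(2*m^2))*(x^3/3)
      = (1+ε)*((1 - Real.exp (-ε))/ε) - (1+ε)/(6*B) := by
    rw [hm, hx]
    field_simp
    ring
  calc m^(c+1) * Real.exp (-m) = m^(c+1) * Real.exp (-m) * 1 := by ring
    _ ≤ m^(c+1) * Real.exp (-m) * ((1+ε)*((1 - Real.exp (-ε))/ε) - (1+ε)/(6*B)) := by
        apply mul_le_mul_of_nonneg_left hscalar (by positivity)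
    _ = m^(c+1) * Real.exp (-m) * ((x/ε)*(1-Real.exp (-ε)) - (B/(2*m^2))*(x^3/3)) := by
        rw [heq2]
    _ = ∫ t in m..(m+x), m^(c+1)*Real.exp (-m) * (Real.exp (-(ε/x)*(t-m)) - (B/(2*m^2))*(t-m)^2) := hIcomp.symm
    _ ≤ ∫ t in m..(m+x), t^(c+1) * Real.exp (-t) := hmono




lemma Esum_two (x : ℝ) : Esum 2 x = 1 + x + x^2/2 := by
  norm_num [Esum, Finset.sum_range_succ, Nat.factorial]

lemma B_two {m : ℝ} (hm : 2.36 ≤ m) :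
    m^2 * Real.exp (-m) ≤ ∫ t in m..(m + m/2), t^2 * Real.exp (-t) := by
  rw [integral_pow_exp_neg]
  rw [Esum_two, Esum_two]
  have hsum := Real.sum_le_exp_of_nonneg (x := m/2) (by linarith) 6
  have hsum' : 1 + m/2 + m^2/8 + m^3/48 + m^4/384 + m^5/3840 ≤ Real.exp (m/2) := by
    have he : ∑ i ∈ Finset.range 6, (m/2)^i / i.factorial
        = 1 + m/2 + m^2/8 + m^3/48 + m^4/384 + m^5/3840 := by
      norm_num [Finset.sum_range_succ, Nat.factorial]
      ring
    rwa [he] at hsum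
  have hkey : 2+3*m+9*m^2/4 ≤ (2+2*m)*Real.exp (m/2) := by
    have h1 : (2+2*m)*(1 + m/2 + m^2/8 + m^3/48 + m^4/384 + m^5/3840) ≤ (2+2*m)*Real.exp (m/2) :=
      mul_le_mul_of_nonneg_left hsum' (by linarith)
    have h2 : 2+3*m+9*m^2/4 ≤ (2+2*m)*(1 + m/2 + m^2/8 + m^3/48 + m^4/384 + m^5/3840) := by
      nlinarith [sq_nonneg (m - 2.36), pow_nonneg (by linarith : (0:ℝ) ≤ m - 2.36) 3,
        pow_nonneg (by linarith : (0:ℝ) ≤ m - 2.36) 4, pow_nonneg (by linarith : (0:ℝ) ≤ m) 3,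
        pow_nonneg (by linarith : (0:ℝ) ≤ m) 4, pow_nonneg (by linarith : (0:ℝ) ≤ m) 5,
        pow_nonneg (by linarith : (0:ℝ) ≤ m) 6]
    linarith
  have hsplit : Real.exp (-(m+m/2)) = Real.exp (-m) * Real.exp (-(m/2)) := by
    rw [← Real.exp_add]; ring_nf
  rw [hsplit]
  have hq : Real.exp (-(m/2)) * ((2+2*m)*Real.exp (m/2)) = 2+2*m := by
    rw [show Real.exp (-(m/2)) * ((2+2*m)*Real.exp (m/2)) = (Real.exp (-(m/2)) * Real.exp (m/2))*(2+2*m) by ring,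
        ← Real.exp_add]
    simp
  have hq2 : Real.exp (-(m/2)) * (2+3*m+9*m^2/4) ≤ 2+2*m := by
    calc Real.exp (-(m/2)) * (2+3*m+9*m^2/4) ≤ Real.exp (-(m/2)) * ((2+2*m)*Real.exp (m/2)) :=
          mul_le_mul_of_nonneg_left hkey (Real.exp_pos _).le
      _ = 2+2*m := hq
  have hE : 0 < Real.exp (-m) := Real.exp_pos _
  have expand : ((2:ℕ).factorial : ℝ) * (Real.exp (-m) * (1+m+m^2/2)
        - Real.exp (-m) * Real.exp (-(m/2)) * (1+(m+m/2)+(m+m/2)^2/2)) - m^2*Real.exp (-m)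
      = Real.exp (-m) * ((2+2*m) - Real.exp (-(m/2)) * (2+3*m+9*m^2/4)) := by
    norm_num [Nat.factorial]
    ring
  nlinarith [mul_le_mul_of_nonneg_left hq2 hE.le, expand]



lemma exp_5_16 : Real.exp (5/16) ≤ 1.36685 := by
  have h := Real.exp_bound' (x := 5/16) (by norm_num) (by norm_num) (n := 5) (by norm_num)
  norm_num [Finset.sum_range_succ, Nat.factorial] at h ⊢
  linarith

lemma exp_125_lt : Real.exp 1.25 < 3.5 := by
  have h : Real.exp 1.25 = (Real.exp (5/16))^4 := by
    rw [← Real.exp_nat_mul]; norm_num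
  rw [h]
  have h2 : (Real.exp (5/16))^4 ≤ 1.36685^4 := by
    apply pow_le_pow_left₀ (Real.exp_pos _).le exp_5_16
  nlinarith [h2]

lemma exp_126_gt : 3.52 < Real.exp 1.26 := by
  have h := Real.sum_le_exp_of_nonneg (x := 1.26) (by norm_num) 7
  norm_num [Finset.sum_range_succ, Nat.factorial] at h
  linarith

lemma exp_0555 : Real.exp 0.555 ≤ 1.74199 := by
  have h := Real.exp_bound' (x := 0.555) (by norm_num) (by norm_num) (n := 5) (by norm_num)
  norm_num [Finset.sum_range_succ, Nat.factorial] at h ⊢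
  linarith

lemma exp_111 : Real.exp 1.11 ≤ 3.04 := by
  have h : Real.exp 1.11 = (Real.exp 0.555)^2 := by
    rw [← Real.exp_nat_mul]; norm_num
  rw [h]
  have h2 : (Real.exp 0.555)^2 ≤ 1.74199^2 := by
    apply pow_le_pow_left₀ (Real.exp_pos _).le exp_0555
  nlinarith [h2]

lemma exp_05675 : Real.exp 0.5675 ≤ 1.7639 := by
  have h := Real.exp_bound' (x := 0.5675) (by norm_num) (by norm_num) (n := 5) (by norm_num)
  norm_num [Finset.sum_range_succ, Nat.factorial] at h ⊢
  linarith

lemma exp_227 : Real.exp 2.27 ≤ 9.681 := by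
  have h : Real.exp 2.27 = (Real.exp 0.5675)^4 := by
    rw [← Real.exp_nat_mul]; norm_num
  rw [h]
  have h2 : (Real.exp 0.5675)^4 ≤ 1.7639^4 := by
    apply pow_le_pow_left₀ (Real.exp_pos _).le exp_05675
  nlinarith [h2]

lemma exp_08175 : Real.exp 0.8175 ≤ 2.26498 := by
  have h := Real.exp_bound' (x := 0.8175) (by norm_num) (by norm_num) (n := 5) (by norm_num)
  norm_num [Finset.sum_range_succ, Nat.factorial] at h ⊢
  linarith

lemma exp_327 : Real.exp 3.27 ≤ 26.4 := by
  have h : Real.exp 3.27 = (Real.exp 0.8175)^4 := by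
    rw [← Real.exp_nat_mul]; norm_num
  rw [h]
  have h2 : (Real.exp 0.8175)^4 ≤ 2.26498^4 := by
    apply pow_le_pow_left₀ (Real.exp_pos _).le exp_08175
  nlinarith [h2]

section M1
variable {m₁ : ℝ} (hm₁_pos : 0 < m₁) (hm₁ : Real.exp m₁ = 1 + 2 * m₁)

include hm₁_pos hm₁

lemma m₁_half : (1:ℝ)/2 ≤ m₁ := by
  have h := Real.add_one_le_exp (-m₁)
  have h2 : Real.exp (-m₁) = (1 + 2*m₁)⁻¹ := by
    rw [Real.exp_neg, hm₁]
  rw [h2] at h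
  have hpos : (0:ℝ) < 1 + 2*m₁ := by linarith
  have h3 : (-m₁+1) * (1+2*m₁) ≤ 1 := by
    have := mul_le_mul_of_nonneg_right h hpos.le
    rwa [inv_mul_cancel₀ (ne_of_gt hpos)] at this
  nlinarith

lemma exp_ge_one_add_two_mul {x : ℝ} (hx : m₁ ≤ x) : 1 + 2*x ≤ Real.exp x := by
  have h1 : Real.exp x = Real.exp m₁ * Real.exp (x - m₁) := by
    rw [← Real.exp_add]; ring_nf
  have h2 : 1 + (x - m₁) ≤ Real.exp (x - m₁) := by
    have := Real.add_one_le_exp (x - m₁); linarith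
  have h3 := m₁_half hm₁_pos hm₁
  rw [h1, hm₁]
  nlinarith [Real.exp_pos (x - m₁)]

lemma m₁_gt : 1.25 < m₁ := by
  by_contra h
  push_neg at h
  have := exp_ge_one_add_two_mul hm₁_pos hm₁ (x := 1.25) h
  have := exp_125_lt
  linarith

lemma m₁_lt : m₁ < 1.26 := by
  by_contra h
  push_neg at h
  set θ : ℝ := 1.26 / m₁ with hθdef
  have hθ : (0:ℝ) < θ := by positivity
  have hθ1 : θ ≤ 1 := by
    rw [hθdef, div_le_one hm₁_pos]; linarith
  have hconv := convexOn_exp.2 (Set.mem_univ (0:ℝ)) (Set.mem_univ m₁)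
    (by linarith : (0:ℝ) ≤ 1 - θ) hθ.le (by ring)
  have heval : (1 - θ) • (0:ℝ) + θ • m₁ = 1.26 := by
    rw [hθdef]; simp only [smul_eq_mul]; field_simp; ring
  rw [heval] at hconv
  have h2 : Real.exp 1.26 ≤ (1 - θ) * 1 + θ * (1 + 2*m₁) := by
    simpa [Real.exp_zero, hm₁, smul_eq_mul] using hconv
  have h3 : θ * m₁ = 1.26 := by
    rw [hθdef]; field_simp
  have h2' : Real.exp 1.26 ≤ 1 + 2 * 1.26 := by nlinarith
  have := exp_126_gt
  linarith

end M1




lemma A_est {m₁ : ℝ} (h125 : 1.25 ≤ m₁) (b : ℕ) (l C : ℝ)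
    (hC : Real.exp (l - 1.25) ≤ C) (hE : C ≤ Esum (b-1) l) :
    regIncGamma b l ≤ 1 - Real.exp (-m₁) := by
  rw [regIncGamma_eq]
  have h1 : Real.exp (l - m₁) ≤ Real.exp (l - 1.25) := Real.exp_le_exp.2 (by linarith)
  have h2 : Real.exp (-m₁) = Real.exp (-l) * Real.exp (l - m₁) := by
    rw [← Real.exp_add]; ring_nf
  have h3 : Real.exp (-l) * Real.exp (l - m₁) ≤ Real.exp (-l) * Esum (b-1) l := by
    apply mul_le_mul_of_nonneg_left _ (Real.exp_pos _).le
    linarith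
  linarith [h2 ▸ h3]

section Anum
variable {m₁ : ℝ} (h125 : 1.25 ≤ m₁)
include h125

lemma A_two : regIncGamma 2 2.36 ≤ 1 - Real.exp (-m₁) := by
  apply A_est h125 2 2.36 3.04
  · calc Real.exp (2.36 - 1.25) = Real.exp 1.11 := by norm_num
      _ ≤ 3.04 := exp_111
  · norm_num [Esum, Finset.sum_range_succ, Nat.factorial]

lemma A_three : regIncGamma 3 3.52 ≤ 1 - Real.exp (-m₁) := by
  apply A_est h125 3 3.52 9.681
  · calc Real.exp (3.52 - 1.25) = Real.exp 2.27 := by norm_num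
      _ ≤ 9.681 := exp_227
  · norm_num [Esum, Finset.sum_range_succ, Nat.factorial]

lemma A_four : regIncGamma 4 4.52 ≤ 1 - Real.exp (-m₁) := by
  apply A_est h125 4 4.52 26.4
  · calc Real.exp (4.52 - 1.25) = Real.exp 3.27 := by norm_num
      _ ≤ 26.4 := exp_327
  · norm_num [Esum, Finset.sum_range_succ, Nat.factorial]

end Anum

lemma int_dec (b : ℕ) {x : ℝ} (hx : (b:ℝ) ≤ x) (h0 : 0 < x) :
    ∫ t in x..(x+1), t^b * Real.exp (-t) ≤ x^b * Real.exp (-x) := by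
  have hpt : ∀ t ∈ Set.Icc x (x+1), t^b * Real.exp (-t) ≤ x^b * Real.exp (-x) := by
    intro t ht
    obtain ⟨ht1, ht2⟩ := ht
    set v : ℝ := (t - x)/x with hv
    have hv0 : 0 ≤ v := div_nonneg (by linarith) h0.le
    have h1v : (1:ℝ)+v = t/x := by rw [hv]; field_simp; ring
    have hb1 : (1+v)^b ≤ Real.exp ((b:ℝ)*v) := by
      calc (1+v)^b ≤ (Real.exp v)^b := pow_le_pow_left₀ (by linarith) (by linarith [Real.add_one_le_exp v]) b
        _ = Real.exp ((b:ℝ)*v) := by rw [← Real.exp_nat_mul]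
    have hb2 : Real.exp ((b:ℝ)*v) ≤ Real.exp (t - x) := by
      apply Real.exp_le_exp.2
      have : (b:ℝ)*v ≤ x*v := mul_le_mul_of_nonneg_right hx hv0
      have hxv : x*v = t - x := by rw [hv]; field_simp
      linarith
    have ht' : t^b ≤ x^b * Real.exp (t-x) := by
      have h2 : (1+v)^b * x^b ≤ Real.exp (t-x) * x^b :=
        mul_le_mul_of_nonneg_right (hb1.trans hb2) (by positivity)
      have h3 : (1+v)^b * x^b = t^b := by
        rw [h1v, ← mul_pow]
        congr 1
        field_simp
      linarith [h3 ▸ h2]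
    calc t^b * Real.exp (-t) ≤ (x^b * Real.exp (t-x)) * Real.exp (-t) :=
          mul_le_mul_of_nonneg_right ht' (Real.exp_pos _).le
      _ = x^b * Real.exp (-x) := by
          rw [mul_assoc, ← Real.exp_add]
          ring_nf
  calc ∫ t in x..(x+1), t^b * Real.exp (-t) ≤ ∫ _t in x..(x+1), x^b * Real.exp (-x) := by
        apply intervalIntegral.integral_mono_on (by linarith)
          ((cont_pow_exp b).intervalIntegrable _ _)
          (intervalIntegrable_const) hpt
    _ = x^b * Real.exp (-x) := by simp

lemma A_ind {m₁ : ℝ} (h125 : 1.25 ≤ m₁) : ∀ b : ℕ, 4 ≤ b →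
    regIncGamma b ((b:ℝ) + 0.52) ≤ 1 - Real.exp (-m₁) := by
  intro b hb
  induction b, hb using Nat.le_induction with
  | base =>
      have h : ((4:ℕ):ℝ) + 0.52 = 4.52 := by norm_num
      rw [h]
      exact A_four h125
  | succ n hn ih =>
      have hstep := step_identity n (by omega) ((n:ℝ) + 0.52) ((n:ℝ) + 1 + 0.52)
      have hint : ∫ t in ((n:ℝ)+0.52)..((n:ℝ)+0.52+1), t^n * Real.exp (-t)
          ≤ ((n:ℝ)+0.52)^n * Real.exp (-((n:ℝ)+0.52)) :=
        int_dec n (by linarith) (by positivity)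
      have he : ((n:ℝ) + 1 + 0.52) = ((n:ℝ)+0.52+1) := by ring
      rw [he] at hstep
      have h2 : regIncGamma (n+1) ((n:ℝ)+0.52+1) ≤ regIncGamma n ((n:ℝ)+0.52) := by
        have hd : regIncGamma (n+1) ((n:ℝ)+0.52+1) - regIncGamma n ((n:ℝ)+0.52) ≤ 0 := by
          rw [hstep]
          apply mul_nonpos_of_nonneg_of_nonpos (by positivity)
          linarith
        linarith
      have he2 : ((n:ℝ)+1) + 0.52 = (n:ℝ)+0.52+1 := by ring
      rw [show (((n+1):ℕ):ℝ) = (n:ℝ)+1 by push_cast; ring, he2]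
      exact le_trans h2 ih

/-- For code rates `R` above the threshold `R' = 1 - e^(-m₁)`, where `m₁` is the unique
positive solution of `e^(m₁) = 1 + 2 m₁`, the sequence `b ↦ m(b)/b` of normalized Gamma
quantiles is nonincreasing; in particular, for every task size `s` the minimum of
`m(b)/b` over `1 ≤ b ≤ s` is attained at the maximum batch size `b = s`. -/
theorem max_batch_size_optimal_above_threshold
    (m₁ R' : ℝ) (hm₁_pos : 0 < m₁) (hm₁ : Real.exp m₁ = 1 + 2 * m₁)
    (hR' : R' = 1 - Real.exp (-m₁))
    (R : ℝ) (hRlo : R' < R) (hRhi : R < 1)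
    (m : ℕ → ℝ) (hm : ∀ b : ℕ, 1 ≤ b → 0 < m b ∧ regIncGamma b (m b) = R) :
    (∀ b b' : ℕ, 1 ≤ b → b ≤ b' → m b / (b : ℝ) ≥ m b' / (b' : ℝ)) ∧
      ∀ s : ℕ, (hs : 1 ≤ s) →
        (Finset.Icc 1 s).inf' (Finset.nonempty_Icc.mpr hs)
            (fun b => m b / (b : ℝ)) = m s / (s : ℝ) := by
  have h125 : 1.25 ≤ m₁ := (m₁_gt hm₁_pos hm₁).le
  have h126 : m₁ < 1.26 := m₁_lt hm₁_pos hm₁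
  -- lower bounds on quantiles
  have hlow : ∀ b : ℕ, 1 ≤ b → ∀ l : ℝ, 0 ≤ l →
      regIncGamma b l ≤ 1 - Real.exp (-m₁) → l < m b := by
    intro b hb l hl hA
    by_contra hcon
    push_neg at hcon
    have h1 : regIncGamma b (m b) ≤ regIncGamma b l :=
      regIncGamma_mono b (hm b hb).1.le hcon
    rw [(hm b hb).2] at h1
    rw [← hR'] at hA
    linarith
  -- main step
  have step : ∀ b : ℕ, 1 ≤ b → m (b+1) / ((b:ℝ)+1) ≤ m b / (b:ℝ) := by
    intro b hb
    obtain ⟨mbpos, mbR⟩ := hm b hb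
    set mb := m b with hmb
    have hbR : (0:ℝ) < b := by positivity
    have hΔ : mb^b * Real.exp (-mb) ≤ ∫ t in mb..(mb + mb/(b:ℝ)), t^b * Real.exp (-t) := by
      obtain ⟨c, rfl⟩ : ∃ c, b = c + 1 := ⟨b - 1, (Nat.succ_pred_eq_of_pos hb).symm⟩
      rcases c with _ | c
      · -- b = 1
        have hm₁lt : m₁ < mb := by
          rw [hmb]
          apply hlow _ (by norm_num) m₁ hm₁_pos.le
          rw [regIncGamma_eq]
          simp [Esum]
        have h2x := exp_ge_one_add_two_mul hm₁_pos hm₁ hm₁lt.le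
        have := B_simple 0 (m := mb) (x := mb) mbpos (by push_cast; ring) h2x
        have he : mb + mb/(((0:ℕ)+1:ℕ):ℝ) = mb + mb := by norm_num
        rw [he]
        exact this
      rcases c with _ | c
      · -- b = 2
        have h236 : (2.36:ℝ) < mb := by
          rw [hmb]
          exact hlow _ (by norm_num) 2.36 (by norm_num) (A_two h125)
        have := B_two h236.le
        norm_num at this ⊢
        convert this using 3 <;> norm_num
      · -- b = c + 3
        set b' : ℕ := c + 3 with hb'
        have hAb : regIncGamma b' ((b' : ℝ) + 0.52) ≤ 1 - Real.exp (-m₁) := by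
          rcases c with _ | c
          · have := A_three h125
            have he : (((3:ℕ)):ℝ) + 0.52 = 3.52 := by norm_num
            rw [hb']
            norm_num
            convert this using 2
            norm_num
          · exact A_ind h125 (c+4) (by omega)
        have hlowb : ((b' : ℝ)) + 0.52 < mb := by
          rw [hmb]
          exact hlow b' (by omega) _ (by positivity) hAb
        set x : ℝ := mb / ((b' : ℝ)) with hx
        set ε : ℝ := x - 1 with hε
        have hbpos : (0:ℝ) < ((b' : ℝ)) := by positivity
        have hmx : mb = (((c+2:ℕ):ℝ) + 1) * x := by
          rw [hx]
          have : (((c+2:ℕ):ℝ) + 1) = ((b' : ℝ)) := by rw [hb']; push_cast; ring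
          rw [this]
          field_simp
        have hxε : x = 1 + ε := by rw [hε]; ring
        have hε0 : 0 < ε := by
          rw [hε, hx]
          have hblt : ((b' : ℝ)) < mb := by linarith
          have := (one_lt_div hbpos).2 hblt
          linarith
        have hbe : 0.52 ≤ (((c+2:ℕ):ℝ) + 1) * ε := by
          have h1 : (((c+2:ℕ):ℝ) + 1) = ((b' : ℝ)) := by rw [hb']; push_cast; ring
          rw [h1, hε, hx]
          have : ((b' : ℝ)) * (mb/((b' : ℝ)) - 1) = mb - ((b' : ℝ)) := by field_simp
          rw [this]
          linarith
        by_cases hεc : ε ≤ 0.26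
        · have := B_quad (c+2) hxε hmx hε0 hεc hbe
          convert this using 4 <;> (try rw [hb']) <;> push_cast <;> ring
        · push_neg at hεc
          have hm₁x : m₁ ≤ x := by
            rw [hxε]; linarith
          have h2x := exp_ge_one_add_two_mul hm₁_pos hm₁ hm₁x
          have hxpos : 0 < x := by rw [hxε]; linarith
          have := B_simple (c+2) hxpos hmx h2x
          convert this using 4 <;> (try rw [hb']) <;> push_cast <;> ring
    -- from hΔ conclude
    have hstep := step_identity b hb mb (mb + mb/(b:ℝ))
    have hPM : R ≤ regIncGamma (b+1) (mb + mb/(b:ℝ)) := by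
      rw [← mbR]
      have hd : 0 ≤ regIncGamma (b+1) (mb + mb/(b:ℝ)) - regIncGamma b mb := by
        rw [hstep]
        apply mul_nonneg (by positivity)
        linarith
      linarith
    have hle : m (b+1) ≤ mb + mb/(b:ℝ) := by
      by_contra hcon
      push_neg at hcon
      have h1 : regIncGamma (b+1) (mb + mb/(b:ℝ)) < regIncGamma (b+1) (m (b+1)) :=
        regIncGamma_strictMono (b+1) (by positivity) hcon
      rw [(hm (b+1) (by omega)).2] at h1
      linarith
    rw [div_le_div_iff₀ (by positivity) hbR]
    have hexp : (mb + mb/(b:ℝ)) * (b:ℝ) = mb * ((b:ℝ)+1) := by field_simp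
    nlinarith [mul_le_mul_of_nonneg_right hle hbR.le, hexp]
  have part1 : ∀ b b' : ℕ, 1 ≤ b → b ≤ b' → m b / (b : ℝ) ≥ m b' / (b' : ℝ) := by
    intro b b' hb hbb
    induction b', hbb using Nat.le_induction with
    | base => exact le_refl _
    | succ n hn ih =>
        have h1 := step n (le_trans hb hn)
        have : ((n:ℝ)+1) = (((n+1):ℕ):ℝ) := by push_cast; ring
        rw [this] at h1
        exact le_trans h1 ih
  refine ⟨part1, ?_⟩
  intro s hs
  apply le_antisymm
  · apply Finset.inf'_le
    simp [hs]
  · apply Finset.le_inf'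
    intro b hbmem
    rw [Finset.mem_Icc] at hbmem
    exact part1 b s hbmem.1 hbmem.2
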